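/- arXiv:1402.7205 — 2 statements merged into one kernel-verified Lean document; each statement's English description precedes it below -/
import Mathlib

section
/- Let S ⊆ ℤ^n be an additive subsemigroup containing 0 with no nonzero invertible element (s ∈ S and -s ∈ S implies s = 0), and suppose S is finitely generated. Then there exists a linear functional ℓ : ℤ^n → ℤ and a total order ≺ on S such that ≺ is compatible with addition (s₁ ≺ s₂ implies s₁ + s₃ ≺ s₂ + s₃ for all s₃ ∈ S) and 0 ≺ s for all s ∈ S \ {0}. -/
set_option maxHeartbeats 1000000

lemma exists_big {k : ℕ} (p r : Fin k → ℚ) (hp : ∀ i, 0 < p i) :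
    ∃ t : ℚ, 0 < t ∧ ∀ i, r i < t * p i := by
  have hs : 0 ≤ ∑ i, max 0 (r i / p i) :=
    Finset.sum_nonneg fun i _ => le_max_left _ _
  refine ⟨1 + ∑ i, max 0 (r i / p i), by linarith, fun i => ?_⟩
  have h1 : max 0 (r i / p i) ≤ ∑ j, max 0 (r j / p j) :=
    Finset.single_le_sum (f := fun j => max 0 (r j / p j))
      (fun j _ => le_max_left _ _) (Finset.mem_univ i)
  have h2 : r i / p i < 1 + ∑ j, max 0 (r j / p j) := by
    have := le_max_right 0 (r i / p i)
    linarith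
  calc r i = (r i / p i) * p i := (div_mul_cancel₀ (r i) (hp i).ne').symm
    _ < (1 + ∑ j, max 0 (r j / p j)) * p i := by
        exact mul_lt_mul_of_pos_right h2 (hp i)

/-- scalar combination, case `ℓ v₀ = 0` -/
lemma combA {k : ℕ} (p q : Fin k → ℚ) (q₀ : ℚ) (hp : ∀ i, 0 < p i) (hq₀ : 0 < q₀) :
    ∃ t : ℚ, ∀ i, 0 < q i + t * p i := by
  obtain ⟨t, _, ht⟩ := exists_big p (fun i => -(q i)) hp
  exact ⟨t, fun i => by have := ht i; linarith⟩

/-- scalar combination, case `ℓ v₀ < 0` -/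
lemma combB {k : ℕ} (p q : Fin k → ℚ) (p₀ q₀ : ℚ) (hp : ∀ i, 0 < p i)
    (hw : ∀ i, 0 < p i * q₀ - p₀ * q i) (h0 : p₀ < 0) :
    ∃ a b : ℚ, 0 < a * q₀ + b * p₀ ∧ ∀ i, 0 < a * q i + b * p i := by
  obtain ⟨T, hT, hTbig⟩ := exists_big (fun i => p i * q₀ - p₀ * q i) p hw
  set ε : ℚ := 1 / T with hε
  have hεpos : 0 < ε := by positivity
  refine ⟨-p₀, q₀ - ε, by nlinarith, fun i => ?_⟩
  have h1 := hTbig i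
  have h2 : ε * p i < p i * q₀ - p₀ * q i := by
    rw [hε]
    rw [div_mul_eq_mul_div, div_lt_iff₀ hT]
    nlinarith
  nlinarith

/-- Gordan/Stiemke: if finitely many vectors in `ℚ^n` admit no nontrivial nonnegative
linear relation, then some linear functional is strictly positive on all of them. -/
lemma gordan (n : ℕ) : ∀ (k : ℕ) (v : Fin k → (Fin n → ℚ)),
    (∀ c : Fin k → ℚ, (∀ i, 0 ≤ c i) → ∑ i, c i • v i = 0 → ∀ i, c i = 0) →
    ∃ ℓ : (Fin n → ℚ) →ₗ[ℚ] ℚ, ∀ i, 0 < ℓ (v i) := by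
  intro k
  induction k with
  | zero => exact fun v _ => ⟨0, fun i => i.elim0⟩
  | succ k ih =>
    intro v hv
    have htail : ∀ c : Fin k → ℚ, (∀ i, 0 ≤ c i) →
        ∑ i, c i • v i.succ = 0 → ∀ i, c i = 0 := by
      intro c hc hsum i
      have h := hv (Fin.cons 0 c)
        (fun j => Fin.cases (le_refl 0) (fun j => hc j) j)
        (by rw [Fin.sum_univ_succ]; simpa using hsum) i.succ
      simpa using h
    obtain ⟨ℓ, hℓ⟩ := ih (fun i => v i.succ) htail
    by_cases h0 : 0 < ℓ (v 0)
    · exact ⟨ℓ, fun i => Fin.cases h0 (fun j => hℓ j) i⟩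
    push_neg at h0
    have hv0ne : v 0 ≠ 0 := by
      intro h
      have := hv (Fin.cons 1 0)
        (fun j => Fin.cases zero_le_one (fun j => le_refl 0) j)
        (by rw [Fin.sum_univ_succ]; simp [h]) 0
      simp at this
    rcases eq_or_lt_of_le h0 with heq | hlt
    · -- case ℓ (v 0) = 0 : use a coordinate functional
      obtain ⟨m, hm⟩ : ∃ m, v 0 m ≠ 0 := by
        by_contra h; push_neg at h; exact hv0ne (funext h)
      have hℓ₂pos : 0 < ((v 0 m) • (LinearMap.proj m : (Fin n → ℚ) →ₗ[ℚ] ℚ)) (v 0) := by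
        simp only [LinearMap.smul_apply, LinearMap.proj_apply, smul_eq_mul]
        exact mul_self_pos.mpr hm
      obtain ⟨t, ht⟩ := combA (fun i => ℓ (v i.succ))
        (fun i => ((v 0 m) • (LinearMap.proj m : (Fin n → ℚ) →ₗ[ℚ] ℚ)) (v i.succ))
        _ hℓ hℓ₂pos
      refine ⟨(v 0 m) • LinearMap.proj m + t • ℓ, fun i => ?_⟩
      refine Fin.cases ?_ (fun j => ?_) i
      · simpa [heq] using hℓ₂pos
      · simpa using ht j
    · -- case ℓ (v 0) < 0
      have hwrel : ∀ c : Fin k → ℚ, (∀ i, 0 ≤ c i) →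
          ∑ i, c i • (ℓ (v i.succ) • v 0 - ℓ (v 0) • v i.succ) = 0 → ∀ i, c i = 0 := by
        intro c hc hsum i
        have hdnn : ∀ j, 0 ≤ (Fin.cons (∑ j, c j * ℓ (v j.succ))
            (fun j => c j * (-(ℓ (v 0)))) : Fin (k+1) → ℚ) j := by
          intro j
          refine Fin.cases ?_ (fun j => ?_) j
          · simp only [Fin.cons_zero]
            exact Finset.sum_nonneg fun j _ => mul_nonneg (hc j) (hℓ j).le
          · simp only [Fin.cons_succ]
            exact mul_nonneg (hc j) (by linarith)
        have hdsum : ∑ j : Fin (k+1), (Fin.cons (∑ j, c j * ℓ (v j.succ))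
            (fun j => c j * (-(ℓ (v 0)))) : Fin (k+1) → ℚ) j • v j = 0 := by
          rw [Fin.sum_univ_succ]
          simp only [Fin.cons_zero, Fin.cons_succ]
          rw [← hsum, Finset.sum_smul, ← Finset.sum_add_distrib]
          refine Finset.sum_congr rfl fun j _ => ?_
          module
        have h0' := hv _ hdnn hdsum 0
        simp only [Fin.cons_zero] at h0'
        have := (Finset.sum_eq_zero_iff_of_nonneg
          (fun j _ => mul_nonneg (hc j) (hℓ j).le)).mp h0' i (Finset.mem_univ i)
        rcases mul_eq_zero.mp this with h | h
        · exact h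
        · exact absurd h (ne_of_gt (hℓ i))
      obtain ⟨ℓ', hℓ'⟩ := ih (fun i => ℓ (v i.succ) • v 0 - ℓ (v 0) • v i.succ) hwrel
      have hwval : ∀ i : Fin k, 0 < ℓ (v i.succ) * ℓ' (v 0) - ℓ (v 0) * ℓ' (v i.succ) := by
        intro i
        have := hℓ' i
        simpa [smul_eq_mul, mul_comm] using this
      obtain ⟨a, b, hab0, hab⟩ := combB (fun i => ℓ (v i.succ)) (fun i => ℓ' (v i.succ))
        (ℓ (v 0)) (ℓ' (v 0)) hℓ hwval hlt
      refine ⟨a • ℓ' + b • ℓ, fun i => ?_⟩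
      refine Fin.cases ?_ (fun j => ?_) i
      · simpa using hab0
      · simpa using hab j

/-- clearing denominators -/
lemma exists_den {ι : Type*} [Fintype ι] (q : ι → ℚ) :
    ∃ D : ℕ, 0 < D ∧ ∀ i, ∃ z : ℤ, q i * D = (z : ℚ) := by
  refine ⟨∏ i, (q i).den, Finset.prod_pos fun i _ => (q i).pos, fun i => ?_⟩
  obtain ⟨m, hm⟩ : ((q i).den : ℤ) ∣ (∏ j, (q j).den : ℕ) := by
    exact_mod_cast Nat.cast_dvd_cast (Finset.dvd_prod_of_mem _ (Finset.mem_univ i))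
  refine ⟨(q i).num * m, ?_⟩
  have h1 : ((∏ j, (q j).den : ℕ) : ℚ) = ((q i).den : ℚ) * (m : ℚ) := by
    exact_mod_cast congrArg (fun z : ℤ => (z : ℚ)) hm
  have hnd := Rat.num_div_den (q i)
  rw [div_eq_iff (by exact_mod_cast (q i).den_ne_zero : ((q i).den : ℚ) ≠ 0)] at hnd
  rw [h1, ← mul_assoc, ← hnd]
  push_cast; ring

/-- abbreviation for the strict lexicographic order on `Fin n → ℤ` -/
def ZLex (n : ℕ) : (Fin n → ℤ) → (Fin n → ℤ) → Prop :=
  Pi.Lex (· < ·) (@fun _ => (· < ·))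

lemma zlex_irrefl {n : ℕ} (a : Fin n → ℤ) : ¬ ZLex n a a := by
  rintro ⟨k, _, hk⟩
  exact lt_irrefl _ hk

lemma zlex_trans {n : ℕ} {a b c : Fin n → ℤ} (h1 : ZLex n a b) (h2 : ZLex n b c) :
    ZLex n a c := by
  obtain ⟨N₁, lt_N₁, a_lt_b⟩ := h1
  obtain ⟨N₂, lt_N₂, b_lt_c⟩ := h2
  rcases lt_trichotomy N₁ N₂ with (H | rfl | H)
  exacts [⟨N₁, fun j hj => (lt_N₁ _ hj).trans (lt_N₂ _ <| hj.trans H), lt_N₂ _ H ▸ a_lt_b⟩,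
    ⟨N₁, fun j hj => (lt_N₁ _ hj).trans (lt_N₂ _ hj), a_lt_b.trans b_lt_c⟩,
    ⟨N₂, fun j hj => (lt_N₁ _ (hj.trans H)).trans (lt_N₂ _ hj), (lt_N₁ _ H).symm ▸ b_lt_c⟩]

lemma zlex_total {n : ℕ} {a b : Fin n → ℤ} (h : a ≠ b) : ZLex n a b ∨ ZLex n b a := by
  have ht := (Pi.isTrichotomous_lex (· < ·) (@fun _ => ((· < ·) : ℤ → ℤ → Prop))
    (wellFounded_lt (α := Fin n))).trichotomous a b
  by_contra hc
  push_neg at hc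
  exact h (ht hc.1 hc.2)

lemma zlex_add_right {n : ℕ} {a b t : Fin n → ℤ} (h : ZLex n a b) :
    ZLex n (a + t) (b + t) := by
  obtain ⟨i, hj, hi⟩ := h
  refine ⟨i, fun j hji => ?_, ?_⟩
  · simp only [Pi.add_apply, hj j hji]
  · simpa using add_lt_add_right hi (t i)



/-- A finitely generated additive subsemigroup `S ⊆ ℤ^n` containing `0`
with no nonzero invertible element admits a linear functional `ℓ : ℤ^n → ℤ` and a
total order `≺` on `S`, compatible with addition and having `0` as least element. -/
theorem sparse_gb_stmt1 (n : ℕ) (S : AddSubmonoid (Fin n → ℤ))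
    (hfg : ∃ F : Finset (Fin n → ℤ), AddSubmonoid.closure (F : Set (Fin n → ℤ)) = S)
    (hptd : ∀ s ∈ S, -s ∈ S → s = 0) :
    ∃ (ℓ : (Fin n → ℤ) →ₗ[ℤ] ℤ) (r : (Fin n → ℤ) → (Fin n → ℤ) → Prop),
      -- `ℓ` is strictly positive on `S \ {0}` and `r` refines `ℓ`
      (∀ s ∈ S, s ≠ 0 → 0 < ℓ s) ∧
      (∀ s₁ ∈ S, ∀ s₂ ∈ S, r s₁ s₂ → ℓ s₁ ≤ ℓ s₂) ∧
      -- `r` is a strict total order on `S`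
      (∀ s ∈ S, ¬ r s s) ∧
      (∀ s₁ ∈ S, ∀ s₂ ∈ S, ∀ s₃ ∈ S, r s₁ s₂ → r s₂ s₃ → r s₁ s₃) ∧
      (∀ s₁ ∈ S, ∀ s₂ ∈ S, s₁ ≠ s₂ → r s₁ s₂ ∨ r s₂ s₁) ∧
      -- compatibility with addition
      (∀ s₁ ∈ S, ∀ s₂ ∈ S, ∀ s₃ ∈ S, r s₁ s₂ → r (s₁ + s₃) (s₂ + s₃)) ∧
      -- `0` is the least element
      (∀ s ∈ S, s ≠ 0 → r 0 s) := by
  classical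
  obtain ⟨F, hF⟩ := hfg
  set F' : Finset (Fin n → ℤ) := F.erase 0 with hF'
  set e := F'.equivFin with he
  set g : Fin F'.card → (Fin n → ℤ) := fun i => (e.symm i : Fin n → ℤ) with hgdef
  have hg : ∀ i, g i ∈ F' := fun i => (e.symm i).2
  set vq : Fin F'.card → (Fin n → ℚ) := fun i j => ((g i) j : ℚ) with hvq
  have hmemS : ∀ x ∈ F, x ∈ S := fun x hx => hF ▸ AddSubmonoid.subset_closure hx
  have hgS : ∀ j, g j ∈ S := fun j => hmemS _ (Finset.mem_of_mem_erase (hg j))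
  -- the Gordan hypothesis
  have hyp : ∀ c : Fin F'.card → ℚ, (∀ i, 0 ≤ c i) → ∑ i, c i • vq i = 0 → ∀ i, c i = 0 := by
    intro c hc hsum i
    obtain ⟨D, hD, hDz⟩ := exists_den c
    choose N hN using hDz
    have hNnn : ∀ j, 0 ≤ N j := by
      intro j
      have h1 : (0:ℚ) ≤ (N j : ℚ) := by
        rw [← hN j]
        exact mul_nonneg (hc j) (by positivity)
      exact_mod_cast h1
    have hsumZ : ∑ j, N j • g j = 0 := by
      funext m
      have h1 : (∑ j, c j • vq j) m = 0 := by rw [hsum]; rfl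
      rw [Finset.sum_apply] at h1
      have h2 : ((∑ j, N j • g j) m : ℚ) = 0 := by
        rw [Finset.sum_apply]
        simp only [Pi.smul_apply, smul_eq_mul]
        push_cast
        have : ∀ j, ((N j : ℚ)) * ((g j m : ℚ)) = (D : ℚ) * (c j • vq j m) := by
          intro j
          rw [← hN j]
          simp only [smul_eq_mul, hvq]
          ring
        calc (∑ j, (N j : ℚ) * (g j m : ℚ)) = ∑ j, (D:ℚ) * (c j • vq j m) :=
              Finset.sum_congr rfl fun j _ => this j
          _ = (D:ℚ) * ∑ j, c j • vq j m := by rw [Finset.mul_sum]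
          _ = 0 := by
              have : ∑ j, c j • vq j m = ∑ j, (c j • vq j) m :=
                Finset.sum_congr rfl fun j _ => rfl
              rw [this, h1, mul_zero]
      have h3 : (∑ j, N j • g j) m = ∑ j, N j * g j m := by
        rw [Finset.sum_apply]; rfl
      rw [h3] at h2 ⊢
      exact_mod_cast h2
    -- from pointedness, N i • g i = 0
    have h1 : N i • g i ∈ S := by
      rw [show N i = ((N i).toNat : ℤ) from (Int.toNat_of_nonneg (hNnn i)).symm,
        natCast_zsmul]
      exact AddSubmonoid.nsmul_mem S (hgS i) _
    have h2 : -(N i • g i) ∈ S := by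
      have hsplit : N i • g i + ∑ j ∈ Finset.univ.erase i, N j • g j = 0 := by
        have h5 := Finset.add_sum_erase Finset.univ (fun j => N j • g j) (Finset.mem_univ i)
        rw [h5]
        exact hsumZ
      have : -(N i • g i) = ∑ j ∈ Finset.univ.erase i, N j • g j :=
        neg_eq_of_add_eq_zero_right hsplit
      rw [this]
      refine AddSubmonoid.sum_mem S fun j _ => ?_
      rw [show N j = ((N j).toNat : ℤ) from (Int.toNat_of_nonneg (hNnn j)).symm,
        natCast_zsmul]
      exact AddSubmonoid.nsmul_mem S (hgS j) _
    have h3 := hptd _ h1 h2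
    have hgne : g i ≠ 0 := Finset.ne_of_mem_erase (hg i)
    have hNi : N i = 0 := by
      rcases smul_eq_zero.mp h3 with h | h
      · exact h
      · exact absurd h hgne
    have h4 : c i * D = 0 := by rw [hN i, hNi]; simp
    rcases mul_eq_zero.mp h4 with h | h
    · exact h
    · exact absurd h (by positivity)
  obtain ⟨L, hL⟩ := gordan n _ vq hyp
  -- convert L to an integer functional
  obtain ⟨E, hE, hEz⟩ := exists_den (fun j : Fin n => L (fun m => if j = m then (1:ℚ) else 0))
  choose a ha using hEz
  set ℓ : (Fin n → ℤ) →ₗ[ℤ] ℤ :=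
    { toFun := fun f => ∑ j, f j * a j
      map_add' := fun x y => by
        simp only [Pi.add_apply, add_mul]
        rw [Finset.sum_add_distrib]
      map_smul' := fun c x => by
        simp only [Pi.smul_apply, smul_eq_mul, RingHom.id_apply, Finset.mul_sum, mul_assoc] }
    with hℓdef
  have hℓapp : ∀ f : Fin n → ℤ, ℓ f = ∑ j, f j * a j := fun f => rfl
  have hcast : ∀ f : Fin n → ℤ, (ℓ f : ℚ) = L (fun j => (f j : ℚ)) * E := by
    intro f
    have hrep : (fun j => (f j : ℚ)) = ∑ j, (f j : ℚ) • (fun m => if j = m then (1:ℚ) else 0) :=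
      pi_eq_sum_univ _
    rw [hrep, map_sum]
    simp only [map_smul, smul_eq_mul]
    rw [Finset.sum_mul, hℓapp]
    push_cast
    refine Finset.sum_congr rfl fun j _ => ?_
    rw [mul_assoc, ha j]
  -- ℓ is positive on nonzero elements of S
  have hpos : ∀ s ∈ S, 0 ≤ ℓ s ∧ (s ≠ 0 → 0 < ℓ s) := by
    intro s hs
    rw [← hF] at hs
    induction hs using AddSubmonoid.closure_induction with
    | mem x hx =>
      by_cases hx0 : x = 0
      · subst hx0; simp
      · have hxF' : x ∈ F' := Finset.mem_erase.mpr ⟨hx0, hx⟩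
        have hgi : g (e ⟨x, hxF'⟩) = x := by
          simp only [hgdef, Equiv.symm_apply_apply]
        have hq : (0:ℚ) < (ℓ x : ℚ) := by
          rw [hcast x]
          have h5 : (fun j => ((x j : ℚ))) = vq (e ⟨x, hxF'⟩) := by
            funext j; rw [hvq]; simp [hgi]
          rw [h5]
          have := hL (e ⟨x, hxF'⟩)
          positivity
        have : (0:ℤ) < ℓ x := by exact_mod_cast hq
        exact ⟨this.le, fun _ => this⟩
    | zero => simp
    | add x y hx hy ihx ihy =>
      refine ⟨by rw [map_add]; exact add_nonneg ihx.1 ihy.1, fun hne => ?_⟩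
      rw [map_add]
      by_cases hx0 : x = 0
      · subst hx0
        have : y ≠ 0 := by simpa using hne
        have := ihy.2 this
        simpa using by linarith [ihx.1, this]
      · have := ihx.2 hx0
        linarith [ihy.1]
  -- the order
  refine ⟨ℓ, fun s₁ s₂ => ℓ s₁ < ℓ s₂ ∨ (ℓ s₁ = ℓ s₂ ∧ ZLex n s₁ s₂),
    fun s hs hne => (hpos s hs).2 hne, ?_, ?_, ?_, ?_, ?_, ?_⟩
  · rintro s₁ _ s₂ _ (h | ⟨h, _⟩)
    · exact h.le
    · exact h.le
  · rintro s _ (h | ⟨_, h⟩)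
    · exact lt_irrefl _ h
    · exact zlex_irrefl _ h
  · rintro s₁ _ s₂ _ s₃ _ (h | ⟨e1, l1⟩) (h' | ⟨e2, l2⟩)
    · exact Or.inl (h.trans h')
    · exact Or.inl (e2 ▸ h)
    · exact Or.inl (e1 ▸ h')
    · exact Or.inr ⟨e1.trans e2, zlex_trans l1 l2⟩
  · intro s₁ _ s₂ _ hne
    rcases lt_trichotomy (ℓ s₁) (ℓ s₂) with h | h | h
    · exact Or.inl (Or.inl h)
    · rcases zlex_total hne with hl | hl
      · exact Or.inl (Or.inr ⟨h, hl⟩)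
      · exact Or.inr (Or.inr ⟨h.symm, hl⟩)
    · exact Or.inr (Or.inl h)
  · rintro s₁ _ s₂ _ s₃ _ (h | ⟨e1, l1⟩)
    · left; rw [map_add, map_add]; linarith
    · right
      constructor
      · rw [map_add, map_add, e1]
      · exact zlex_add_right l1
  · intro s hs hne
    left
    rw [map_zero]
    exact (hpos s hs).2 hne
end

section
/- Let M ⊆ ℤ^n be a finite set containing 0 such that the semigroup S_M generated by M has no nonzero invertible element, and let χ : k[S_M^{(h)}] → k[S_M] be the dehomogenization map X^{(s,d)} ↦ X^s. Let ≺ be a graded admissible ordering on k[S_M^{(h)}] with associated ordering ≺' on k[S_M]. If G is a finite set of homogeneous elements of a homogeneous ideal I ⊆ k[S_M^{(h)}] such that every leading monomial of a nonzero element of I is divisible by the leading monomial of some g ∈ G, then every leading monomial (with respect to ≺') of a nonzero element of χ(I) is divisible by the leading monomial of χ(g) for some g ∈ G. -/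
open AddMonoidAlgebra

/-- The affine semigroup `S_M ⊆ ℤ^n` generated by `M`. -/
def sgS (n : ℕ) (M : Finset (Fin n → ℤ)) : AddSubmonoid (Fin n → ℤ) :=
  AddSubmonoid.closure (M : Set (Fin n → ℤ))

/-- The homogeneous semigroup `S_M^{(h)} ⊆ ℤ^{n+1}` generated by `{(α,1) : α ∈ M}`. -/
def sgSh (n : ℕ) (M : Finset (Fin n → ℤ)) : AddSubmonoid ((Fin n → ℤ) × ℤ) :=
  AddSubmonoid.closure ((fun α => (α, (1 : ℤ))) '' (M : Set (Fin n → ℤ)))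

lemma sgSh_le_comap_fst (n : ℕ) (M : Finset (Fin n → ℤ)) :
    sgSh n M ≤ (sgS n M).comap (AddMonoidHom.fst (Fin n → ℤ) ℤ) := by
  rw [sgSh, AddSubmonoid.closure_le]
  rintro x ⟨α, hα, rfl⟩
  exact AddSubmonoid.subset_closure hα

/-- The additive monoid morphism `S_M^{(h)} → S_M`, `(s,d) ↦ s`. -/
def sgFst (n : ℕ) (M : Finset (Fin n → ℤ)) : (sgSh n M) →+ (sgS n M) :=
  AddMonoidHom.codRestrict ((AddMonoidHom.fst (Fin n → ℤ) ℤ).domRestrict (sgSh n M)) _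
    (fun x => sgSh_le_comap_fst n M x.2)

/-- The dehomogenization morphism `χ_M : k[S_M^{(h)}] → k[S_M]`, `X^{(s,d)} ↦ X^s`. -/
noncomputable def sgChi (n : ℕ) (M : Finset (Fin n → ℤ)) (k : Type*) [CommRing k] :
    AddMonoidAlgebra k (sgSh n M) →ₐ[k] AddMonoidAlgebra k (sgS n M) :=
  AddMonoidAlgebra.mapDomainAlgHom k k (sgFst n M)

/-- `m` is the leading monomial of `f` with respect to the strict order `r`. -/
def IsLMOf {σ : Type*} {k : Type*} [Field k] (r : σ → σ → Prop)
    (f : AddMonoidAlgebra k σ) (m : σ) : Prop :=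
  m ∈ f.coeff.support ∧ ∀ m' ∈ f.coeff.support, m' ≠ m → r m' m



lemma aux_single_one_mul {k G : Type*} [Semiring k] [AddCommMonoid G] (a : G)
    (f : AddMonoidAlgebra k G) :
    AddMonoidAlgebra.single a 1 * f =
      AddMonoidAlgebra.ofCoeff (Finsupp.mapDomain (a + ·) f.coeff) := by
  rw [AddMonoidAlgebra.mul_def, AddMonoidAlgebra.coeff_single, Finsupp.sum_single_index]
  · apply AddMonoidAlgebra.coeff_injective
    rw [AddMonoidAlgebra.coeff_finsuppSum]
    exact Finsupp.sum_congr (fun b _ => by rw [one_mul]; rfl)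
  · simp

lemma sgChi_apply (n : ℕ) (M : Finset (Fin n → ℤ)) (k : Type*) [CommRing k]
    (x : AddMonoidAlgebra k (sgSh n M)) :
    sgChi n M k x = AddMonoidAlgebra.ofCoeff (Finsupp.mapDomain (sgFst n M) x.coeff) := rfl

lemma sgFst_surj (n : ℕ) (M : Finset (Fin n → ℤ)) : Function.Surjective (sgFst n M) := by
  rintro ⟨s, hs⟩
  have : ∃ d : ℤ, (s, d) ∈ sgSh n M := by
    induction hs using AddSubmonoid.closure_induction with
    | mem x hx => exact ⟨1, AddSubmonoid.subset_closure ⟨x, hx, rfl⟩⟩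
    | zero => exact ⟨0, (sgSh n M).zero_mem⟩
    | add x y hx hy ihx ihy =>
      obtain ⟨d1, h1⟩ := ihx
      obtain ⟨d2, h2⟩ := ihy
      exact ⟨d1 + d2, add_mem h1 h2⟩
  obtain ⟨d, hd⟩ := this
  exact ⟨⟨(s, d), hd⟩, rfl⟩

lemma sgChi_surj (n : ℕ) (M : Finset (Fin n → ℤ)) (k : Type*) [CommRing k] :
    Function.Surjective (sgChi n M k) := by
  intro y
  refine ⟨AddMonoidAlgebra.ofCoeff (Finsupp.mapDomain (Function.surjInv (sgFst_surj n M)) y.coeff), ?_⟩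
  rw [sgChi_apply, AddMonoidAlgebra.coeff_ofCoeff, ← Finsupp.mapDomain_comp]
  have : (sgFst n M) ∘ (Function.surjInv (sgFst_surj n M)) = id := by
    funext x; exact Function.surjInv_eq (sgFst_surj n M) x
  rw [this, Finsupp.mapDomain_id]


lemma zero_deg_mem (n : ℕ) (M : Finset (Fin n → ℤ)) (h0 : (0 : Fin n → ℤ) ∈ M)
    (e : ℤ) (he : 0 ≤ e) : ((0 : Fin n → ℤ), e) ∈ sgSh n M := by
  obtain ⟨N, rfl⟩ := Int.eq_ofNat_of_zero_le he
  have h1 : ((0 : Fin n → ℤ), (1 : ℤ)) ∈ sgSh n M :=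
    AddSubmonoid.subset_closure ⟨0, h0, rfl⟩
  have h2 := AddSubmonoid.nsmul_mem _ h1 N
  simpa using h2

/-- dehomogenizing a homogeneous sparse Gröbner basis (w.r.t. a graded
admissible ordering) yields a sparse Gröbner basis of the dehomogenized ideal. -/
theorem sparse_gb_stmt5 (n : ℕ) (k : Type*) [Field k] (M : Finset (Fin n → ℤ))
    (h0 : (0 : Fin n → ℤ) ∈ M)
    (hptd : ∀ s ∈ sgS n M, -s ∈ sgS n M → s = 0)
    -- `r'` is an admissible ordering on the monomials of `k[S_M]`
    (r' : (Fin n → ℤ) → (Fin n → ℤ) → Prop)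
    (hirr : ∀ s ∈ sgS n M, ¬ r' s s)
    (htrans : ∀ s₁ ∈ sgS n M, ∀ s₂ ∈ sgS n M, ∀ s₃ ∈ sgS n M, r' s₁ s₂ → r' s₂ s₃ → r' s₁ s₃)
    (htotal : ∀ s₁ ∈ sgS n M, ∀ s₂ ∈ sgS n M, s₁ ≠ s₂ → r' s₁ s₂ ∨ r' s₂ s₁)
    (hcompat : ∀ s₁ ∈ sgS n M, ∀ s₂ ∈ sgS n M, ∀ s₃ ∈ sgS n M, r' s₁ s₂ → r' (s₁ + s₃) (s₂ + s₃))
    (hzero : ∀ s ∈ sgS n M, s ≠ 0 → r' 0 s)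
    -- `rh` is the associated graded ordering on the monomials of `k[S_M^{(h)}]`
    (rh : (sgSh n M) → (sgSh n M) → Prop)
    (hrh : ∀ a b : sgSh n M, rh a b ↔
      ((a : (Fin n → ℤ) × ℤ).2 < (b : (Fin n → ℤ) × ℤ).2 ∨
        ((a : (Fin n → ℤ) × ℤ).2 = (b : (Fin n → ℤ) × ℤ).2 ∧
          r' (a : (Fin n → ℤ) × ℤ).1 (b : (Fin n → ℤ) × ℤ).1)))
    -- `I` is a homogeneous ideal of `k[S_M^{(h)}]`
    (I : Ideal (AddMonoidAlgebra k (sgSh n M)))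
    (hIhom : ∀ f ∈ I, ∀ d : ℤ,
      AddMonoidAlgebra.ofCoeff (Finsupp.filter (fun m : sgSh n M => (m : (Fin n → ℤ) × ℤ).2 = d) f.coeff) ∈ I)
    -- `G` is a finite set of homogeneous elements of `I` whose leading monomials
    -- divide the leading monomial of every nonzero element of `I`
    (G : Finset (AddMonoidAlgebra k (sgSh n M)))
    (hGI : ∀ g ∈ G, g ∈ I)
    (hGhom : ∀ g ∈ G, ∃ d : ℤ, ∀ m ∈ g.coeff.support, (m : (Fin n → ℤ) × ℤ).2 = d)
    (hGB : ∀ f ∈ I, f ≠ 0 → ∀ m, IsLMOf rh f m →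
      ∃ g ∈ G, ∃ mg, IsLMOf rh g mg ∧ ∃ c : sgSh n M, m = mg + c) :
    -- conclusion: leading monomials of `χ_M(G)` divide every leading monomial of `χ_M(I)`
    ∀ f' ∈ Ideal.map (sgChi n M k) I, f' ≠ 0 →
      ∀ m', IsLMOf (fun a b : sgS n M => r' (a : Fin n → ℤ) (b : Fin n → ℤ)) f' m' →
        ∃ g ∈ G, ∃ mg', IsLMOf (fun a b : sgS n M => r' (a : Fin n → ℤ) (b : Fin n → ℤ))
          (sgChi n M k g) mg' ∧ ∃ c : sgS n M, m' = mg' + c := by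
  classical
  intro f' hf' hf'ne m' hm'
  obtain ⟨f, hfI, hchif⟩ := (Ideal.mem_map_iff_of_surjective _ (sgChi_surj n M k)).mp hf'
  have hfne : f ≠ 0 := fun h => hf'ne (by rw [← hchif, h, map_zero])
  set T : Finset ℤ := f.coeff.support.image (fun m : sgSh n M => (m : (Fin n → ℤ) × ℤ).2) with hT
  have hTne : T.Nonempty := by
    rw [hT]
    exact Finset.Nonempty.image (Finsupp.support_nonempty_iff.mpr (AddMonoidAlgebra.coeff_eq_zero.not.mpr hfne)) (fun m => (m : (Fin n → ℤ) × ℤ).2)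
  set D := T.max' hTne with hD
  have hmem0 : ∀ d ∈ T, (((0 : Fin n → ℤ), D - d)) ∈ sgSh n M := fun d hd =>
    zero_deg_mem n M h0 _ (sub_nonneg.mpr (T.le_max' d hd))
  set F : ℤ → AddMonoidAlgebra k (sgSh n M) := fun d =>
    AddMonoidAlgebra.ofCoeff (Finsupp.filter (fun m : sgSh n M => (m : (Fin n → ℤ) × ℤ).2 = d) f.coeff) with hF
  set ft : AddMonoidAlgebra k (sgSh n M) := ∑ d ∈ T.attach,
    AddMonoidAlgebra.single ⟨((0 : Fin n → ℤ), D - d.1), hmem0 d.1 d.2⟩ (1 : k) * F d.1 with hft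
  have hftI : ft ∈ I := Ideal.sum_mem _ fun d _ => Ideal.mul_mem_left _ _ (hIhom f hfI d.1)
  have hdecomp : ∑ d ∈ T.attach, F d.1 = f := by
    rw [Finset.sum_attach T (fun d => F d)]
    ext m
    rw [AddMonoidAlgebra.coeff_sum, Finset.sum_apply']
    simp only [hF, AddMonoidAlgebra.coeff_ofCoeff, Finsupp.filter_apply]
    rw [Finset.sum_ite_eq T ((m : (Fin n → ℤ) × ℤ).2) (fun _ => f.coeff m)]
    by_cases h : (m : (Fin n → ℤ) × ℤ).2 ∈ T
    · simp [h]
    · simp only [h, if_false]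
      symm
      rw [← Finsupp.notMem_support_iff]
      intro hc
      exact h (by rw [hT]; exact Finset.mem_image_of_mem _ hc)
  have hchift : sgChi n M k ft = f' := by
    rw [hft, map_sum]
    have : ∀ d ∈ T.attach, sgChi n M k
        (AddMonoidAlgebra.single ⟨((0 : Fin n → ℤ), D - d.1), hmem0 d.1 d.2⟩ (1 : k) * F d.1)
        = sgChi n M k (F d.1) := by
      intro d _
      rw [map_mul]
      have h1 : sgChi n M k
          (AddMonoidAlgebra.single ⟨((0 : Fin n → ℤ), D - d.1), hmem0 d.1 d.2⟩ (1 : k)) = 1 := by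
        rw [sgChi_apply, AddMonoidAlgebra.coeff_single, Finsupp.mapDomain_single]
        have : sgFst n M ⟨((0 : Fin n → ℤ), D - d.1), hmem0 d.1 d.2⟩ = 0 := by
          apply Subtype.ext; rfl
        rw [this]
        rfl
      rw [h1, one_mul]
    rw [Finset.sum_congr rfl this, ← map_sum, hdecomp, hchif]
  have hdeg : ∀ m ∈ ft.coeff.support, (m : (Fin n → ℤ) × ℤ).2 = D := by
    intro m hm
    rw [hft, AddMonoidAlgebra.coeff_sum] at hm
    obtain ⟨d, hd, hmd⟩ := Finsupp.mem_support_finset_sum m hm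
    rw [aux_single_one_mul] at hmd
    have h2 := Finsupp.mapDomain_support hmd
    obtain ⟨m1, hm1, rfl⟩ := Finset.mem_image.mp h2
    have hm1d : (m1 : (Fin n → ℤ) × ℤ).2 = d.1 := by
      rw [hF, AddMonoidAlgebra.coeff_ofCoeff] at hm1
      rw [Finsupp.support_filter, Finset.mem_filter] at hm1
      exact hm1.2
    show ((⟨((0 : Fin n → ℤ), D - d.1), hmem0 d.1 d.2⟩ : sgSh n M) + m1 :
      (Fin n → ℤ) × ℤ).2 = D
    have : ((⟨((0 : Fin n → ℤ), D - d.1), hmem0 d.1 d.2⟩ : sgSh n M) + m1 :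
        (Fin n → ℤ) × ℤ) = (((0 : Fin n → ℤ), D - d.1) : (Fin n → ℤ) × ℤ)
        + (m1 : (Fin n → ℤ) × ℤ) := rfl
    rw [this]
    show (D - d.1) + (m1 : (Fin n → ℤ) × ℤ).2 = D
    rw [hm1d]; ring
  have hinjft : Set.InjOn (sgFst n M) ↑ft.coeff.support := by
    intro a ha b hb hab
    apply Subtype.ext
    apply Prod.ext
    · exact congrArg Subtype.val hab
    · rw [hdeg a ha, hdeg b hb]
  have hsupp : (sgChi n M k ft).coeff.support = ft.coeff.support.image (sgFst n M) := by
    rw [sgChi_apply]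
    exact Finsupp.mapDomain_support_of_injOn _ hinjft
  have hm'supp : m' ∈ ft.coeff.support.image (sgFst n M) := by
    rw [← hsupp, hchift]; exact hm'.1
  obtain ⟨m0, hm0supp, hm0eq⟩ := Finset.mem_image.mp hm'supp
  have hLM0 : IsLMOf rh ft m0 := by
    refine ⟨hm0supp, ?_⟩
    intro m'' hm'' hne
    rw [hrh]
    right
    refine ⟨by rw [hdeg m'' hm'', hdeg m0 hm0supp], ?_⟩
    have h1 : sgFst n M m'' ∈ (sgChi n M k ft).coeff.support := by
      rw [hsupp]; exact Finset.mem_image_of_mem _ hm''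
    have h2 : sgFst n M m'' ≠ m' := by
      intro hc
      apply hne
      exact hinjft hm'' hm0supp (by rw [hc, hm0eq])
    have h3 := hm'.2 (sgFst n M m'') (by rw [← hchift]; exact h1) h2
    rw [← hm0eq] at h3
    exact h3
  have hftne : ft ≠ 0 := by
    intro h
    rw [h] at hm0supp
    simp at hm0supp
  obtain ⟨g, hgG, mg, hLMg, c, hc⟩ := hGB ft hftI hftne m0 hLM0
  obtain ⟨dg, hdg⟩ := hGhom g hgG
  have hinjg : Set.InjOn (sgFst n M) ↑g.coeff.support := by
    intro a ha b hb hab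
    apply Subtype.ext
    apply Prod.ext
    · exact congrArg Subtype.val hab
    · rw [hdg a ha, hdg b hb]
  have hsuppg : (sgChi n M k g).coeff.support = g.coeff.support.image (sgFst n M) := by
    rw [sgChi_apply]
    exact Finsupp.mapDomain_support_of_injOn _ hinjg
  refine ⟨g, hgG, sgFst n M mg, ⟨?_, ?_⟩, sgFst n M c, ?_⟩
  · rw [hsuppg]; exact Finset.mem_image_of_mem _ hLMg.1
  · intro m'' hm'' hne
    rw [hsuppg] at hm''
    obtain ⟨m1, hm1, rfl⟩ := Finset.mem_image.mp hm''
    have hne1 : m1 ≠ mg := fun h => hne (by rw [h])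
    have h4 := hLMg.2 m1 hm1 hne1
    rw [hrh] at h4
    rcases h4 with h4 | h4
    · rw [hdg m1 hm1, hdg mg hLMg.1] at h4
      exact absurd h4 (lt_irrefl _)
    · exact h4.2
  · rw [← hm0eq, hc, map_add]
end
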